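/- Let (V; η_1,…,η_k; ω_1,…,ω_k) be a k-contact structure on a finite-dimensional real vector space V and let W ⊆ V be any subspace. Set U := W^{⊥k} and D := U ∩ U^{⊥k} ∩ ⋂_{α=1}^k ker η_α. Then the restrictions of the η_α and ω_α to U descend to well-defined linear functionals and alternating bilinear forms on the quotient U/D, and the descended data constitutes a k-contact structure on U/D; that is, the quotient W^{⊥k} / ((W^{⊥k})^{⊥k} ∩ W^{⊥k} ∩ ⋂_{α=1}^k ker η_α) is a k-contact vector space. -/
import Mathlib

open Module

/-- A `k`-contact structure on a real vector space `V`. -/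
def IsKContactStruct {V : Type*} [AddCommGroup V] [Module ℝ V] {k : ℕ}
    (η : Fin k → (V →ₗ[ℝ] ℝ)) (ω : Fin k → (V →ₗ[ℝ] V →ₗ[ℝ] ℝ)) : Prop :=
  (∀ α (v : V), ω α v v = 0) ∧
  finrank ℝ ↥(⨅ α, LinearMap.ker (η α)) + k = finrank ℝ V ∧
  finrank ℝ ↥(⨅ α, LinearMap.ker (ω α)) = k ∧
  (⨅ α, LinearMap.ker (η α)) ⊓ (⨅ α, LinearMap.ker (ω α)) = ⊥

/-- The `k`-orthogonal `W^{⊥k} = {v : V | ω α (w, v) = 0 for all w ∈ W and all α}`. -/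
def kOrth {V : Type*} [AddCommGroup V] [Module ℝ V] {k : ℕ}
    (ω : Fin k → (V →ₗ[ℝ] V →ₗ[ℝ] ℝ)) (W : Submodule ℝ V) : Submodule ℝ V where
  carrier := {v | ∀ w ∈ W, ∀ α, ω α w v = 0}
  zero_mem' := fun w _ α => map_zero (ω α w)
  add_mem' := by
    intro a b ha hb w hw α
    rw [map_add, ha w hw α, hb w hw α, add_zero]
  smul_mem' := by
    intro c a ha w hw α
    rw [map_smul, ha w hw α, smul_zero]

/-- `D = U ∩ U^{⊥k} ∩ ⋂ ker (η α)` with `U = W^{⊥k}`, regarded as a subspace of `U`. -/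
noncomputable def blackerD {V : Type*} [AddCommGroup V] [Module ℝ V] {k : ℕ}
    (η : Fin k → (V →ₗ[ℝ] ℝ)) (ω : Fin k → (V →ₗ[ℝ] V →ₗ[ℝ] ℝ))
    (W : Submodule ℝ V) : Submodule ℝ ↥(kOrth ω W) :=
  Submodule.comap (kOrth ω W).subtype
    (kOrth ω (kOrth ω W) ⊓ ⨅ α, LinearMap.ker (η α))

section Aux

variable {V : Type*} [AddCommGroup V] [Module ℝ V] {k : ℕ}
  (η : Fin k → (V →ₗ[ℝ] ℝ)) (ω : Fin k → (V →ₗ[ℝ] V →ₗ[ℝ] ℝ)) (W : Submodule ℝ V)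

lemma mem_kOrth {v : V} : v ∈ kOrth ω W ↔ ∀ w ∈ W, ∀ α, ω α w v = 0 := Iff.rfl

lemma mem_blackerD {u : ↥(kOrth ω W)} :
    u ∈ blackerD η ω W ↔ (u : V) ∈ kOrth ω (kOrth ω W) ∧ ∀ α, η α (u : V) = 0 := by
  simp [blackerD, Submodule.mem_inf, Submodule.mem_iInf, LinearMap.mem_ker]

lemma omega_skew (halt : ∀ α (v : V), ω α v v = 0) (α : Fin k) (v w : V) :
    ω α w v = - ω α v w := by
  have h0 := halt α (v + w)
  simp only [map_add, LinearMap.add_apply] at h0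
  have h1 := halt α v
  have h2 := halt α w
  linarith

/-- The functionals `η α` descend to the quotient `U ⧸ D`. -/
noncomputable def etaQ (α : Fin k) : (↥(kOrth ω W) ⧸ blackerD η ω W) →ₗ[ℝ] ℝ :=
  (blackerD η ω W).liftQ ((η α).comp (kOrth ω W).subtype) (by
    intro u hu
    rw [mem_blackerD] at hu
    simpa using hu.2 α)

@[simp] lemma etaQ_mk (α : Fin k) (u : ↥(kOrth ω W)) :
    etaQ η ω W α (Submodule.Quotient.mk u) = η α (u : V) :=
  rfl

/-- The restriction of `ω α` to `U`, descended in the second variable. -/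
noncomputable def omegaQ1 (halt : ∀ α (v : V), ω α v v = 0) (α : Fin k) :
    ↥(kOrth ω W) →ₗ[ℝ] ((↥(kOrth ω W) ⧸ blackerD η ω W) →ₗ[ℝ] ℝ) where
  toFun u := (blackerD η ω W).liftQ
    (((ω α).compl₁₂ (kOrth ω W).subtype (kOrth ω W).subtype) u) (by
      intro d hd
      rw [mem_blackerD] at hd
      simpa using hd.1 (u : V) u.2 α)
  map_add' u v := by
    apply LinearMap.ext
    intro x
    obtain ⟨y, rfl⟩ := Submodule.Quotient.mk_surjective _ x
    simp [Submodule.liftQ_apply]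
  map_smul' c u := by
    apply LinearMap.ext
    intro x
    obtain ⟨y, rfl⟩ := Submodule.Quotient.mk_surjective _ x
    simp [Submodule.liftQ_apply]

/-- The forms `ω α` descend to the quotient `U ⧸ D`. -/
noncomputable def omegaQ (halt : ∀ α (v : V), ω α v v = 0) (α : Fin k) :
    (↥(kOrth ω W) ⧸ blackerD η ω W) →ₗ[ℝ]
      (↥(kOrth ω W) ⧸ blackerD η ω W) →ₗ[ℝ] ℝ :=
  (blackerD η ω W).liftQ (omegaQ1 η ω W halt α) (by
    intro d hd
    rw [LinearMap.mem_ker]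
    apply LinearMap.ext
    intro x
    obtain ⟨y, rfl⟩ := Submodule.Quotient.mk_surjective _ x
    rw [mem_blackerD] at hd
    have : ω α (d : V) (y : V) = - ω α (y : V) (d : V) := omega_skew ω halt α _ _
    simp only [omegaQ1, Submodule.liftQ_apply, LinearMap.coe_mk, AddHom.coe_mk,
      LinearMap.compl₁₂_apply, Submodule.coe_subtype, LinearMap.zero_apply]
    rw [this, hd.1 (y : V) y.2 α, neg_zero])

@[simp] lemma omegaQ_mk (halt : ∀ α (v : V), ω α v v = 0) (α : Fin k)
    (u u' : ↥(kOrth ω W)) :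
    omegaQ η ω W halt α (Submodule.Quotient.mk u) (Submodule.Quotient.mk u')
      = ω α (u : V) (u' : V) := rfl

lemma finrank_comap_subtype (U p : Submodule ℝ V) :
    finrank ℝ (Submodule.comap U.subtype p) = finrank ℝ ↥(U ⊓ p) := by
  have e := Submodule.equivMapOfInjective U.subtype U.injective_subtype
    (Submodule.comap U.subtype p)
  rw [Submodule.map_comap_subtype] at e
  exact e.finrank_eq

lemma finrank_map_mkQ_add {M : Type*} [AddCommGroup M] [Module ℝ M]
    [FiniteDimensional ℝ M] (D B : Submodule ℝ M) (hDB : D ≤ B) :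
    finrank ℝ (Submodule.map D.mkQ B) + finrank ℝ D = finrank ℝ B := by
  have h1 : Submodule.map D.mkQ B = LinearMap.range (D.mkQ.comp B.subtype) := by
    rw [LinearMap.range_comp, Submodule.range_subtype]
  have h2 : LinearMap.ker (D.mkQ.comp B.subtype) = Submodule.comap B.subtype D := by
    rw [LinearMap.ker_comp, Submodule.ker_mkQ]
  have h3 := LinearMap.finrank_range_add_finrank_ker (D.mkQ.comp B.subtype)
  rw [← h1, h2] at h3
  rwa [(Submodule.comapSubtypeEquivOfLe hDB).finrank_eq] at h3

end Aux

/-- **The `k`-contact analogue of Blacker's theorem.**  For any subspace `W` of a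
`k`-contact vector space, with `U = W^{⊥k}` and
`D = U ∩ U^{⊥k} ∩ ⋂ ker (η α)`, the `η α` and `ω α` descend to the quotient `U ⧸ D`
and the descended data is a `k`-contact structure on it. -/
theorem blacker_kContact_reduction
    {V : Type*} [AddCommGroup V] [Module ℝ V] [FiniteDimensional ℝ V] {k : ℕ}
    (η : Fin k → (V →ₗ[ℝ] ℝ)) (ω : Fin k → (V →ₗ[ℝ] V →ₗ[ℝ] ℝ))
    (h : IsKContactStruct η ω) (W : Submodule ℝ V) :
    ∃ (ηQ : Fin k → ((↥(kOrth ω W) ⧸ blackerD η ω W) →ₗ[ℝ] ℝ))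
      (ωQ : Fin k → ((↥(kOrth ω W) ⧸ blackerD η ω W) →ₗ[ℝ]
        (↥(kOrth ω W) ⧸ blackerD η ω W) →ₗ[ℝ] ℝ)),
      (∀ α (u : ↥(kOrth ω W)), ηQ α (Submodule.Quotient.mk u) = η α (u : V)) ∧
      (∀ α (u u' : ↥(kOrth ω W)),
        ωQ α (Submodule.Quotient.mk u) (Submodule.Quotient.mk u') = ω α (u : V) (u' : V)) ∧
      IsKContactStruct ηQ ωQ := by
  obtain ⟨halt, hK, hR, hKR⟩ := h
  set K : Submodule ℝ V := ⨅ α, LinearMap.ker (η α) with hKdef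
  set R : Submodule ℝ V := ⨅ α, LinearMap.ker (ω α) with hRdef
  set S' : Submodule ℝ V := kOrth ω (kOrth ω W) with hS'def
  have hskew : ∀ (α : Fin k) (v w : V), ω α w v = - ω α v w := omega_skew ω halt
  -- R is contained in every k-orthogonal
  have hRle : ∀ T : Submodule ℝ V, R ≤ kOrth ω T := by
    intro T r hr
    have hr' : ∀ α, ω α r = 0 := by
      simpa [hRdef, Submodule.mem_iInf, LinearMap.mem_ker] using hr
    intro w _ α
    rw [hskew α r w, hr' α]
    simp
  have hRU : R ≤ kOrth ω W := hRle W
  have hRS' : R ≤ S' := hRle (kOrth ω W)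
  -- K ⊔ R = ⊤
  have hKRtop : K ⊔ R = ⊤ := by
    apply Submodule.eq_top_of_finrank_eq
    have := Submodule.finrank_sup_add_finrank_inf_eq K R
    rw [hKR] at this
    simp only [finrank_bot, add_zero] at this
    omega
  -- for any T with R ≤ T, finrank T = finrank (K ⊓ T) + k
  have hsplit : ∀ T : Submodule ℝ V, R ≤ T →
      finrank ℝ ↥T = finrank ℝ ↥(K ⊓ T) + k := by
    intro T hRT
    have hmod : (K ⊓ T) ⊔ R = T := by
      rw [sup_comm, ← sup_inf_assoc_of_le K hRT, sup_comm R K, hKRtop, top_inf_eq]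
    have hdisj : (K ⊓ T) ⊓ R = ⊥ := by
      rw [eq_bot_iff, ← hKR]
      exact inf_le_inf_right R inf_le_left
    have := Submodule.finrank_sup_add_finrank_inf_eq (K ⊓ T) R
    rw [hmod, hdisj, hR] at this
    simp only [finrank_bot, add_zero] at this
    omega
  -- D as a comap
  have hDeq : blackerD η ω W = Submodule.comap (kOrth ω W).subtype (S' ⊓ K) := rfl
  have hDrank : finrank ℝ ↥(blackerD η ω W)
      = finrank ℝ ↥(K ⊓ (S' ⊓ kOrth ω W)) := by
    have e : kOrth ω W ⊓ (S' ⊓ K) = K ⊓ (S' ⊓ kOrth ω W) := by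
      rw [inf_comm (kOrth ω W) (S' ⊓ K), inf_comm S' K, inf_assoc]
    rw [hDeq, finrank_comap_subtype, e]
  -- the two relevant submodules of U
  set A1 : Submodule ℝ ↥(kOrth ω W) := Submodule.comap (kOrth ω W).subtype K with hA1def
  set A2 : Submodule ℝ ↥(kOrth ω W) := Submodule.comap (kOrth ω W).subtype S' with hA2def
  have hDA1 : blackerD η ω W ≤ A1 := by
    rw [hDeq, hA1def]
    exact Submodule.comap_mono inf_le_right
  have hDA2 : blackerD η ω W ≤ A2 := by
    rw [hDeq, hA2def]
    exact Submodule.comap_mono inf_le_left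
  have hA1rank : finrank ℝ ↥A1 = finrank ℝ ↥(K ⊓ kOrth ω W) := by
    rw [hA1def, finrank_comap_subtype, inf_comm (kOrth ω W) K]
  have hA2rank : finrank ℝ ↥A2 = finrank ℝ ↥(S' ⊓ kOrth ω W) := by
    rw [hA2def, finrank_comap_subtype, inf_comm (kOrth ω W) S']
  -- the kernel of the descended η's
  have hkerη : (⨅ α, LinearMap.ker (etaQ η ω W α))
      = Submodule.map (blackerD η ω W).mkQ A1 := by
    apply le_antisymm
    · intro x hx
      obtain ⟨y, rfl⟩ := Submodule.Quotient.mk_surjective _ x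
      simp only [Submodule.mem_iInf, LinearMap.mem_ker] at hx
      refine ⟨y, show (y : V) ∈ ⨅ α, LinearMap.ker (η α) from ?_, rfl⟩
      simp only [Submodule.mem_iInf, LinearMap.mem_ker]
      exact fun β => hx β
    · rintro x ⟨y, hy, rfl⟩
      have hy' : (y : V) ∈ K := Submodule.mem_comap.1 hy
      rw [hKdef] at hy'
      simp only [Submodule.mem_iInf, LinearMap.mem_ker] at hy' ⊢
      intro α
      show etaQ η ω W α (Submodule.Quotient.mk y) = 0
      rw [etaQ_mk]
      exact hy' α
  -- the kernel (radical) of the descended ω's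
  have hkerω : (⨅ α, LinearMap.ker (omegaQ η ω W halt α))
      = Submodule.map (blackerD η ω W).mkQ A2 := by
    apply le_antisymm
    · intro x hx
      obtain ⟨y, rfl⟩ := Submodule.Quotient.mk_surjective _ x
      simp only [Submodule.mem_iInf, LinearMap.mem_ker] at hx
      refine ⟨y, ?_, rfl⟩
      refine Submodule.mem_comap.2 ?_
      intro w hw α
      have h0 := LinearMap.congr_fun (hx α)
        (Submodule.Quotient.mk (⟨w, hw⟩ : ↥(kOrth ω W)))
      rw [omegaQ_mk, LinearMap.zero_apply] at h0
      show ω α w ((kOrth ω W).subtype y) = 0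
      rw [hskew α ((kOrth ω W).subtype y) w]
      simpa using h0
    · rintro x ⟨y, hy, rfl⟩
      have hy' : (y : V) ∈ kOrth ω (kOrth ω W) := Submodule.mem_comap.1 hy
      simp only [Submodule.mem_iInf, LinearMap.mem_ker]
      intro α
      apply LinearMap.ext
      intro z
      obtain ⟨z', rfl⟩ := Submodule.Quotient.mk_surjective _ z
      show omegaQ η ω W halt α (Submodule.Quotient.mk y) (Submodule.Quotient.mk z') = 0
      rw [omegaQ_mk, hskew α (z' : V) (y : V)]
      have h0 : ω α (z' : V) (y : V) = 0 := hy' (z' : V) z'.2 α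
      rw [h0, neg_zero]
  refine ⟨etaQ η ω W, omegaQ η ω W halt, fun α u => rfl, fun α u u' => rfl, ?_, ?_, ?_, ?_⟩
  · -- alternating
    intro α x
    obtain ⟨y, rfl⟩ := Submodule.Quotient.mk_surjective _ x
    exact halt α (y : V)
  · -- codimension of ⋂ ker ηQ
    rw [hkerη]
    have h1 := finrank_map_mkQ_add (blackerD η ω W) A1 hDA1
    have h2 := finrank_map_mkQ_add (blackerD η ω W) (⊤ : Submodule ℝ ↥(kOrth ω W)) le_top
    rw [Submodule.map_top, Submodule.range_mkQ, finrank_top, finrank_top] at h2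
    have h3 := hsplit (kOrth ω W) hRU
    omega
  · -- rank of ⋂ ker ωQ
    rw [hkerω]
    have h1 := finrank_map_mkQ_add (blackerD η ω W) A2 hDA2
    have h3 := hsplit (S' ⊓ kOrth ω W) (le_inf hRS' hRU)
    omega
  · -- trivial intersection
    rw [eq_bot_iff]
    intro x hx
    obtain ⟨hx1, hx2⟩ := hx
    rw [hkerη] at hx1
    rw [hkerω] at hx2
    obtain ⟨a, ha, rfl⟩ := hx1
    obtain ⟨b, hb, hab⟩ := hx2
    have hdiff : b - a ∈ blackerD η ω W := (Submodule.Quotient.eq _).1 hab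
    have haD : a ∈ blackerD η ω W := by
      have haA2 : a ∈ A2 := by
        have e : a = b - (b - a) := (sub_sub_cancel b a).symm
        rw [e]
        exact Submodule.sub_mem _ hb (hDA2 hdiff)
      rw [hDeq]
      exact ⟨haA2, Submodule.mem_comap.1 ha⟩
    simpa [Submodule.Quotient.mk_eq_zero] using haD
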